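/- Let (g, ω) be a symplectic Lie algebra with compatible left-symmetric product ∘, L_x(y) = x∘y, R_x(y) = y∘x, ∇_x = (2/3)·L_x - (1/3)·R_x, and curvature R(x,y) = ∇_x ∘ ∇_y - ∇_y ∘ ∇_x - ∇_{[x,y]}. Define the Ricci tensor ric(x, y) = tr(z ↦ R(x, z)y). Then for all x, y ∈ g: ric(x, y) = (1/9)·( tr(L_{x∘y}) + tr(L_x ∘ L_y) ). In particular, if the Lie algebra g is nilpotent, then ric = 0. -/

import Mathlib

noncomputable section

variable {g : Type*} [LieRing g] [LieAlgebra ℝ g]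

/-- The torsion free symplectic connection `∇_x = (2/3)·L_x - (1/3)·R_x` associated to a
left-symmetric product `P` (`P x y = x∘y`, so `L_x = P x` and `R_x = P.flip x`). -/
def nabla (P : g →ₗ[ℝ] g →ₗ[ℝ] g) (x : g) : Module.End ℝ g :=
  (2/3 : ℝ) • P x - (1/3 : ℝ) • P.flip x

/-- The curvature `R(x,y) = ∇_x∇_y - ∇_y∇_x - ∇_{[x,y]}` of `∇`. -/
def curv (P : g →ₗ[ℝ] g →ₗ[ℝ] g) (x y : g) : Module.End ℝ g :=
  nabla P x ∘ₗ nabla P y - nabla P y ∘ₗ nabla P x - nabla P ⁅x, y⁆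

/-- The linear map `z ↦ ∇_z y`. -/
def nablaR (P : g →ₗ[ℝ] g →ₗ[ℝ] g) (y : g) : Module.End ℝ g :=
  (2/3 : ℝ) • P.flip y - (1/3 : ℝ) • P y

/-- The linear map `z ↦ R(x,z)y`, whose trace is the Ricci curvature `ric(x,y)`. -/
def ricOp (P : g →ₗ[ℝ] g →ₗ[ℝ] g) (x y : g) : Module.End ℝ g :=
  nabla P x ∘ₗ nablaR P y - nablaR P (nabla P x y)
    - nablaR P y ∘ₗ LieAlgebra.ad ℝ g x

/-- If `B` is the `ω`-adjoint of `A` with respect to a nondegenerate bilinear form `ω`,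
then `A` and `B` have the same trace. -/
lemma trace_eq_trace_of_omega_adjoint [FiniteDimensional ℝ g] (ω : g →ₗ[ℝ] g →ₗ[ℝ] ℝ)
    (hnondeg : ∀ x : g, (∀ y : g, ω x y = 0) → x = 0)
    (A B : Module.End ℝ g) (h : ∀ z w : g, ω (A z) w = ω z (B w)) :
    LinearMap.trace ℝ g A = LinearMap.trace ℝ g B := by
  have hinj : Function.Injective (ω : g →ₗ[ℝ] Module.Dual ℝ g) := by
    rw [← LinearMap.ker_eq_bot, LinearMap.ker_eq_bot']
    intro x hx
    exact hnondeg x fun y => by rw [hx]; rfl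
  let e : g ≃ₗ[ℝ] Module.Dual ℝ g :=
    LinearMap.linearEquivOfInjective ω hinj Subspace.dual_finrank_eq.symm
  have key : ∀ z : g, e (A z) = Module.Dual.transpose (R := ℝ) B (e z) := by
    intro z
    ext w
    simpa [e, LinearMap.linearEquivOfInjective_apply, Module.Dual.transpose_apply] using h z w
  have hconj : e.conj A = Module.Dual.transpose (R := ℝ) B := by
    apply LinearMap.ext
    intro f
    obtain ⟨z, rfl⟩ := e.surjective f
    simpa [LinearEquiv.conj_apply] using key z
  rw [← LinearMap.trace_conj' A e, hconj, LinearMap.trace_transpose']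

/-- Expansion of the Ricci operator as a linear combination of compositions of left and
right multiplication operators. -/
lemma ricOp_expand (P : g →ₗ[ℝ] g →ₗ[ℝ] g)
    (hAd : (LieAlgebra.ad ℝ g x : Module.End ℝ g) = P x - P.flip x) (y : g) :
    ricOp P x y = (4/9 : ℝ) • (P x ∘ₗ P.flip y) - (2/9 : ℝ) • (P x ∘ₗ P y)
      - (2/9 : ℝ) • (P.flip x ∘ₗ P.flip y) + (1/9 : ℝ) • (P.flip x ∘ₗ P y)
      - ((4/9 : ℝ) • P.flip (P x y) - (2/9 : ℝ) • P.flip (P y x)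
        - (2/9 : ℝ) • P (P x y) + (1/9 : ℝ) • P (P y x))
      - ((2/3 : ℝ) • (P.flip y ∘ₗ P x) - (2/3 : ℝ) • (P.flip y ∘ₗ P.flip x)
        - (1/3 : ℝ) • (P y ∘ₗ P x) + (1/3 : ℝ) • (P y ∘ₗ P.flip x)) := by
  unfold ricOp nabla nablaR
  rw [hAd]
  ext z
  simp only [LinearMap.sub_apply, LinearMap.add_apply, LinearMap.smul_apply,
    LinearMap.comp_apply, map_sub, map_smul, LinearMap.flip_apply]
  module

/-- Ricci curvature formula for the natural connection of a symplectic Lie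
algebra, and Ricci flatness in the nilpotent case. -/
theorem symplectic_lie_algebra_ricci_formula
    [FiniteDimensional ℝ g]
    (ω : g →ₗ[ℝ] g →ₗ[ℝ] ℝ)
    (halt : ∀ x : g, ω x x = 0)
    (hnondeg : ∀ x : g, (∀ y : g, ω x y = 0) → x = 0)
    (hcocycle : ∀ x y z : g, ω ⁅x, y⁆ z + ω ⁅y, z⁆ x + ω ⁅z, x⁆ y = 0)
    (P : g →ₗ[ℝ] g →ₗ[ℝ] g)
    (hdef : ∀ x y z : g, ω (P x y) z = - ω y ⁅x, z⁆)
    (hls : ∀ x y z : g, P (P x y) z - P x (P y z) = P (P y x) z - P y (P x z))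
    (hcomp : ∀ x y : g, P x y - P y x = ⁅x, y⁆) :
    (∀ x y : g,
      (∀ z : g, ricOp P x y z = curv P x z y) ∧
      LinearMap.trace ℝ g (ricOp P x y) =
        (1/9 : ℝ) * (LinearMap.trace ℝ g (P (P x y)) +
          LinearMap.trace ℝ g (P x ∘ₗ P y))) ∧
    (LieRing.IsNilpotent g →
      ∀ x y : g, LinearMap.trace ℝ g (ricOp P x y) = 0) := by
  set T := LinearMap.trace ℝ g with hT
  -- skew-symmetry of ω
  have hskew : ∀ a b : g, ω a b = - ω b a := by
    intro a b
    have h := halt (a + b)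
    simp only [map_add, LinearMap.add_apply, halt] at h
    linarith
  -- ad v = L_v - R_v
  have hAd : ∀ v : g, (LieAlgebra.ad ℝ g v : Module.End ℝ g) = P v - P.flip v := by
    intro v
    ext z
    simp only [LieAlgebra.ad_apply, LinearMap.sub_apply, LinearMap.flip_apply]
    rw [← hcomp v z]
  -- the ω-adjoint of L_v is R_v - L_v
  have hLadj : ∀ v z w : g, ω (P v z) w = ω z ((P.flip v - P v) w) := by
    intro v z w
    rw [hdef, ← hcomp v w]
    simp only [map_sub, LinearMap.sub_apply, LinearMap.flip_apply]
    ring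
  -- R_v is ω-symmetric
  have hRsym : ∀ v z w : g, ω (P.flip v z) w = ω z (P.flip v w) := by
    intro v z w
    simp only [LinearMap.flip_apply]
    rw [hdef z v w, hskew z (P w v), hdef w v z, ← lie_skew z w, map_neg]
  -- trace of R_v is twice trace of L_v
  have htrR : ∀ v : g, T (P.flip v) = 2 * T (P v) := by
    intro v
    have h := trace_eq_trace_of_omega_adjoint ω hnondeg (P v) (P.flip v - P v) (hLadj v)
    rw [map_sub] at h
    linarith [h]
  have comm : ∀ A B : Module.End ℝ g, T (A ∘ₗ B) = T (B ∘ₗ A) := fun A B =>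
    LinearMap.trace_mul_comm ℝ A B
  -- adjoint trace identity for products
  have htr2 : ∀ A A' B B' : Module.End ℝ g,
      (∀ z w : g, ω (A z) w = ω z (A' w)) → (∀ z w : g, ω (B z) w = ω z (B' w)) →
      T (A ∘ₗ B) = T (B' ∘ₗ A') := by
    intro A A' B B' hA hB
    refine trace_eq_trace_of_omega_adjoint ω hnondeg _ _ ?_
    intro z w
    simp only [LinearMap.comp_apply]
    rw [hA (B z) w, hB z (A' w)]
  -- identity (1): tr(L_x R_y) = tr(R_x R_y) - tr(L_x R_y)
  have e1 : ∀ x y : g, T (P x ∘ₗ P.flip y) =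
      T (P.flip x ∘ₗ P.flip y) - T (P x ∘ₗ P.flip y) := by
    intro x y
    have h := htr2 (P x) (P.flip x - P x) (P.flip y) (P.flip y) (hLadj x) (hRsym y)
    rw [LinearMap.comp_sub, map_sub, comm (P.flip y) (P.flip x), comm (P.flip y) (P x)] at h
    linarith [h]
  -- identity (2): tr(R_x R_y) = tr(L_x R_y) + tr(R_x L_y)
  have e2 : ∀ x y : g, T (P.flip x ∘ₗ P.flip y) =
      T (P x ∘ₗ P.flip y) + T (P.flip x ∘ₗ P y) := by
    intro x y
    have h := htr2 (P x) (P.flip x - P x) (P y) (P.flip y - P y) (hLadj x) (hLadj y)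
    rw [LinearMap.comp_sub, LinearMap.sub_comp, LinearMap.sub_comp, map_sub, map_sub,
      map_sub, comm (P.flip y) (P.flip x), comm (P.flip y) (P x), comm (P y) (P.flip x),
      comm (P y) (P x)] at h
    linarith [h]
  -- identity (3): tr(R_x R_y) = 2 tr(L_{x∘y})
  have e3 : ∀ x y : g, T (P.flip x ∘ₗ P.flip y) = 2 * T (P (P x y)) := by
    intro x y
    have hop : P.flip (P x y) = P.flip y ∘ₗ P.flip x - P.flip y ∘ₗ P x + P x ∘ₗ P.flip y := by
      ext z
      simp only [LinearMap.sub_apply, LinearMap.add_apply, LinearMap.comp_apply,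
        LinearMap.flip_apply]
      have h := hls z x y
      rw [← sub_eq_zero] at h ⊢
      have hrw : P z (P x y) - (P (P z x) y - P (P x z) y + P x (P z y)) =
          -((P (P z x) y - P z (P x y)) - (P (P x z) y - P x (P z y))) := by abel
      rw [hrw, h, neg_zero]
    have htr := htrR (P x y)
    rw [hop, map_add, map_sub, comm (P.flip y) (P.flip x), comm (P.flip y) (P x)] at htr
    linarith [htr]
  -- identity (4): tr(L_{x∘y}) = tr(L_{y∘x})
  have e4 : ∀ x y : g, T (P (P x y)) = T (P (P y x)) := by
    intro x y
    have hop : P (P x y) - P x ∘ₗ P y = P (P y x) - P y ∘ₗ P x := by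
      ext z
      simpa using hls x y z
    have h := congrArg T hop
    rw [map_sub, map_sub, comm (P y) (P x)] at h
    linarith [h]
  have key : ∀ x y : g, T (ricOp P x y) =
      (1/9 : ℝ) * (T (P (P x y)) + T (P x ∘ₗ P y)) := by
    intro x y
    rw [ricOp_expand P (hAd x) y]
    simp only [map_sub, map_add, map_smul, smul_eq_mul]
    rw [comm (P.flip y) (P x), comm (P.flip y) (P.flip x), comm (P y) (P x),
      comm (P y) (P.flip x), htrR (P x y), htrR (P y x)]
    linarith [e1 x y, e2 x y, e3 x y, e4 x y]
  refine ⟨fun x y => ⟨fun z => rfl, key x y⟩, ?_⟩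
  -- nilpotent case
  intro hnil x y
  rw [key x y]
  -- trace of L_v vanishes since ad v is nilpotent
  have htrL : ∀ v : g, T (P v) = 0 := by
    intro v
    have hadn : IsNilpotent (LieAlgebra.ad ℝ g v : Module.End ℝ g) :=
      LieModule.isNilpotent_toEnd_of_isNilpotent ℝ g g v
    have htr0 : T ((LieAlgebra.ad ℝ g v : Module.End ℝ g)) = 0 :=
      (LinearMap.isNilpotent_trace_of_isNilpotent hadn).eq_zero
    rw [hAd v, map_sub, htrR v] at htr0
    linarith [htr0]
  -- the Killing form vanishes, and equals tr(L_x L_y)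
  have hkill : T (P x ∘ₗ P y) = 0 := by
    have hk0 : killingForm ℝ g x y = 0 := by
      rw [show killingForm ℝ g = 0 from LieModule.traceForm_eq_zero_of_isNilpotent ℝ g g]
      rfl
    rw [killingForm_apply_apply, hAd x, hAd y] at hk0
    rw [LinearMap.comp_sub, LinearMap.sub_comp, LinearMap.sub_comp, map_sub, map_sub,
      map_sub] at hk0
    have hc1 := comm (P.flip y) (P x)
    have hc2 := comm (P.flip y) (P.flip x)
    have he2 := e2 x y
    rw [hT] at hc1 hc2 he2 ⊢
    linarith [hk0, hc1, hc2, he2]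
  rw [htrL (P x y), hkill]
  ring
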